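/- Let I ⊆ ℝ[x_1,...,x_n] be a zero-dimensional ideal such that V_ℂ(I) ⊂ ℝ^n (all complex solutions are real), and let s be a separating polynomial for V(I). Then there exist a nonzero polynomial η ∈ ℝ[t] and polynomials ρ_1,...,ρ_n ∈ ℝ[t] such that: (i) the real roots of η are exactly {s(a) : a ∈ V(I)}, and (ii) V(I) = {(ρ_1(τ),...,ρ_n(τ)) : τ ∈ ℝ, η(τ) = 0}. -/

import Mathlib

theorem real_PUR_exists {n : ℕ}
    (I : Ideal (MvPolynomial (Fin n) ℝ))
    (hfin : FiniteDimensional ℝ (MvPolynomial (Fin n) ℝ ⧸ I))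
    (hreal : ∀ x : Fin n → ℂ, (∀ q ∈ I, MvPolynomial.aeval x q = 0) →
      ∀ i, (x i).im = 0)
    (s : MvPolynomial (Fin n) ℝ)
    (hsep : ∀ a b : Fin n → ℝ,
      (∀ q ∈ I, MvPolynomial.eval a q = 0) →
      (∀ q ∈ I, MvPolynomial.eval b q = 0) →
      a ≠ b → MvPolynomial.eval a s ≠ MvPolynomial.eval b s) :
    ∃ η : Polynomial ℝ, η ≠ 0 ∧ ∃ ρ : Fin n → Polynomial ℝ,
      (∀ τ : ℝ, η.eval τ = 0 ↔
        ∃ a : Fin n → ℝ, (∀ q ∈ I, MvPolynomial.eval a q = 0) ∧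
          MvPolynomial.eval a s = τ) ∧
      {a : Fin n → ℝ | ∀ q ∈ I, MvPolynomial.eval a q = 0} =
        {x : Fin n → ℝ | ∃ τ : ℝ, η.eval τ = 0 ∧
          ∀ i, x i = (ρ i).eval τ} := by
  classical
  set V : Set (Fin n → ℝ) := {a | ∀ q ∈ I, MvPolynomial.eval a q = 0} with hVdef
  -- V is finite
  have hVfin : V.Finite := by
    have hint : Algebra.IsIntegral ℝ (MvPolynomial (Fin n) ℝ ⧸ I) :=
      Algebra.IsIntegral.of_finite ℝ _
    have key : ∀ i : Fin n, ∃ p : Polynomial ℝ, p ≠ 0 ∧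
        ∀ a ∈ V, p.eval (a i) = 0 := by
      intro i
      obtain ⟨p, hmon, hp⟩ := hint.isIntegral (Ideal.Quotient.mk I (MvPolynomial.X i))
      refine ⟨p, hmon.ne_zero, fun a ha => ?_⟩
      have hp' : Polynomial.aeval ((Ideal.Quotient.mkₐ ℝ I) (MvPolynomial.X i)) p = 0 := hp
      rw [Polynomial.aeval_algHom_apply] at hp'
      have hmem : Polynomial.aeval (MvPolynomial.X i) p ∈ I := by
        exact Ideal.Quotient.eq_zero_iff_mem.mp hp'
      have h0 : MvPolynomial.eval a (Polynomial.aeval (MvPolynomial.X i) p) = 0 :=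
        ha _ hmem
      have haa : (MvPolynomial.aeval a)
          (Polynomial.aeval (MvPolynomial.X i : MvPolynomial (Fin n) ℝ) p) = 0 := by
        rwa [show (MvPolynomial.aeval a)
            (Polynomial.aeval (MvPolynomial.X i : MvPolynomial (Fin n) ℝ) p)
            = MvPolynomial.eval a (Polynomial.aeval (MvPolynomial.X i) p) by
          rw [MvPolynomial.aeval_def, Algebra.algebraMap_self]; rfl]
      have := Polynomial.aeval_algHom_apply (MvPolynomial.aeval a)
        (MvPolynomial.X i : MvPolynomial (Fin n) ℝ) p
      rw [haa] at this
      simpa using this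
    choose p hp0 hroot using key
    refine Set.Finite.subset (Set.Finite.pi
      (fun i => Polynomial.finite_setOf_isRoot (hp0 i))) ?_
    intro a ha
    exact fun i _ => hroot i a ha
  set Vfin : Finset (Fin n → ℝ) := hVfin.toFinset with hVfindef
  have hmemV : ∀ a, a ∈ Vfin ↔ a ∈ V := fun a => hVfin.mem_toFinset
  set T : Finset ℝ := Vfin.image (fun a => MvPolynomial.eval a s) with hTdef
  set η : Polynomial ℝ := ∏ τ ∈ T, (Polynomial.X - Polynomial.C τ) with hηdef
  have hηmon : η.Monic := Polynomial.monic_prod_of_monic _ _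
    (fun τ _ => Polynomial.monic_X_sub_C τ)
  have hroot : ∀ τ, η.eval τ = 0 ↔ τ ∈ T := by
    intro τ
    rw [hηdef, Polynomial.eval_prod, Finset.prod_eq_zero_iff]
    simp [sub_eq_zero, eq_comm]
  have hinj : Set.InjOn (fun a => MvPolynomial.eval a s) Vfin := by
    intro a ha b hb hab
    by_contra hne
    exact hsep a b ((hmemV a).mp ha) ((hmemV b).mp hb) hne hab
  refine ⟨η, hηmon.ne_zero,
    fun i => Lagrange.interpolate Vfin (fun a => MvPolynomial.eval a s) (fun a => a i),
    fun τ => ?_, ?_⟩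
  · rw [hroot]
    constructor
    · intro hτ
      obtain ⟨a, ha, hae⟩ := Finset.mem_image.mp hτ
      exact ⟨a, (hmemV a).mp ha, hae⟩
    · rintro ⟨a, ha, hae⟩
      exact Finset.mem_image.mpr ⟨a, (hmemV a).mpr ha, hae⟩
  · ext x
    constructor
    · intro hx
      refine ⟨MvPolynomial.eval x s, (hroot _).mpr
        (Finset.mem_image.mpr ⟨x, (hmemV x).mpr hx, rfl⟩), fun i => ?_⟩
      exact (Lagrange.eval_interpolate_at_node (r := fun a => a i) hinj ((hmemV x).mpr hx)).symm
    · rintro ⟨τ, hτ, hx⟩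
      obtain ⟨a, ha, hae⟩ := Finset.mem_image.mp ((hroot τ).mp hτ)
      have hxa : x = a := by
        funext i
        rw [hx i, ← hae]
        have h := Lagrange.eval_interpolate_at_node (r := fun a => a i) hinj ha
        exact h
      rw [hxa]
      exact (hmemV a).mp ha
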